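/- For every n ≥ 2 and every integer k with n ≤ k ≤ n(n+1)/2, there exists a set S of positions (i,j) with 1 ≤ i ≤ j ≤ n, containing all diagonal positions (i,i), with |S| = k, such that the linear span of the matrix units {E_{ij} : (i,j) ∈ S} is closed under matrix multiplication (hence is a unital subalgebra of M_n(ℝ) of dimension k). -/

import Mathlib

open Matrix Finset

lemma minsum_aux (a : ℕ → ℕ) : ∀ (n m : ℕ), m ≤ ∑ i ∈ Finset.range n, a i →
    ∑ i ∈ Finset.range n, min (a i) (m - ∑ j ∈ Finset.range i, a j) = m := by
  intro n
  induction n with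
  | zero => intro m hm; simp at hm ⊢; omega
  | succ n ih =>
    intro m hm
    rw [Finset.sum_range_succ]
    by_cases h : m ≤ ∑ i ∈ Finset.range n, a i
    · rw [ih m h]
      have : m - ∑ j ∈ Finset.range n, a j = 0 := by omega
      rw [this]; simp
    · push_neg at h
      have h1 : ∀ i ∈ Finset.range n, min (a i) (m - ∑ j ∈ Finset.range i, a j) = a i := by
        intro i hi
        rw [Finset.mem_range] at hi
        have hle : ∑ j ∈ Finset.range (i+1), a j ≤ ∑ j ∈ Finset.range n, a j :=
          Finset.sum_le_sum_of_subset (Finset.range_subset_range.2 hi)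
        rw [Finset.sum_range_succ] at hle
        omega
      rw [Finset.sum_congr rfl h1]
      rw [Finset.sum_range_succ] at hm
      have e1 : (Finset.range n).sum a = ∑ j ∈ Finset.range n, a j := rfl
      omega

lemma span_mul_closed {n : ℕ} (S : Finset (Fin n × Fin n))
    (hcl : ∀ p ∈ S, ∀ q ∈ S, p.2 = q.1 → (p.1, q.2) ∈ S) :
    ∀ X Y : Matrix (Fin n) (Fin n) ℝ,
      X ∈ Submodule.span ℝ ((fun p : Fin n × Fin n =>
        Matrix.single p.1 p.2 (1 : ℝ)) '' (S : Set (Fin n × Fin n))) →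
      Y ∈ Submodule.span ℝ ((fun p : Fin n × Fin n =>
        Matrix.single p.1 p.2 (1 : ℝ)) '' (S : Set (Fin n × Fin n))) →
      X * Y ∈ Submodule.span ℝ ((fun p : Fin n × Fin n =>
        Matrix.single p.1 p.2 (1 : ℝ)) '' (S : Set (Fin n × Fin n))) := by
  intro X Y hX hY
  induction hX using Submodule.span_induction with
  | zero => simp only [zero_mul]; exact Submodule.zero_mem _
  | add x y hx hy ihx ihy => rw [add_mul]; exact Submodule.add_mem _ ihx ihy
  | smul a x hx ihx => rw [smul_mul_assoc]; exact Submodule.smul_mem _ a ihx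
  | mem x hx =>
    induction hY using Submodule.span_induction with
    | zero => simp only [mul_zero]; exact Submodule.zero_mem _
    | add y z hy hz ihy ihz => rw [mul_add]; exact Submodule.add_mem _ ihy ihz
    | smul a y hy ihy => rw [mul_smul_comm]; exact Submodule.smul_mem _ a ihy
    | mem y hy =>
      obtain ⟨p, hp, rfl⟩ := hx
      obtain ⟨q, hq, rfl⟩ := hy
      by_cases h : p.2 = q.1
      · rw [show (Matrix.single p.1 p.2 (1:ℝ)) * Matrix.single q.1 q.2 (1:ℝ)
            = Matrix.single p.1 q.2 (1:ℝ) by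
          rw [h]; simpa using Matrix.single_mul_single_same (c := (1:ℝ)) p.1 q.1 q.2 (1:ℝ)]
        exact Submodule.subset_span ⟨(p.1, q.2), hcl p hp q hq h, rfl⟩
      · rw [show (Matrix.single p.1 p.2 (1:ℝ)) * Matrix.single q.1 q.2 (1:ℝ) = 0 from
          Matrix.single_mul_single_of_ne (h := h) ..]
        exact Submodule.zero_mem _

/-- For every `n ≥ 2` and `n ≤ k ≤ n(n+1)/2` there is a set `S` of upper-triangular
positions, containing the diagonal, of cardinality `k`, whose span of matrix units is
closed under multiplication (a matrix incidence algebra of dimension `k`). -/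
theorem stmt13 (n k : ℕ) (hn : 2 ≤ n) (hk₁ : n ≤ k) (hk₂ : k ≤ n * (n + 1) / 2) :
    ∃ S : Finset (Fin n × Fin n),
      (∀ p ∈ S, p.1 ≤ p.2) ∧ (∀ i : Fin n, (i, i) ∈ S) ∧ S.card = k ∧
      (∀ X Y : Matrix (Fin n) (Fin n) ℝ,
        X ∈ Submodule.span ℝ ((fun p : Fin n × Fin n =>
          Matrix.single p.1 p.2 (1 : ℝ)) '' (S : Set (Fin n × Fin n))) →
        Y ∈ Submodule.span ℝ ((fun p : Fin n × Fin n =>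
          Matrix.single p.1 p.2 (1 : ℝ)) '' (S : Set (Fin n × Fin n))) →
        X * Y ∈ Submodule.span ℝ ((fun p : Fin n × Fin n =>
          Matrix.single p.1 p.2 (1 : ℝ)) '' (S : Set (Fin n × Fin n)))) := by
  set m := k - n with hmdef
  set σ : ℕ → ℕ := fun i => ∑ j ∈ Finset.range i, (n - 1 - j) with hσ
  -- bound on m
  have hgauss : ∑ j ∈ Finset.range n, (n - 1 - j) = n * (n - 1) / 2 := by
    rw [show (∑ j ∈ Finset.range n, (n - 1 - j)) = ∑ j ∈ Finset.range n, id (n - 1 - j) from rfl,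
      Finset.sum_range_reflect]
    simpa using Finset.sum_range_id n
  have htri : n * (n + 1) / 2 = n + n * (n - 1) / 2 := by
    have h1 := Finset.sum_range_id (n + 1)
    rw [Finset.sum_range_succ, Finset.sum_range_id] at h1
    have h2 : (n + 1) * (n + 1 - 1) = n * (n + 1) := by
      rw [Nat.add_sub_cancel, mul_comm]
    rw [h2] at h1
    omega
  have hm : m ≤ ∑ j ∈ Finset.range n, (n - 1 - j) := by rw [hgauss]; omega
  refine ⟨Finset.univ.filter (fun p : Fin n × Fin n =>
      p.1.val = p.2.val ∨ (p.1.val < p.2.val ∧ σ p.1.val + (n - 1 - p.2.val) < m)),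
      ?_, ?_, ?_, ?_⟩
  · intro p hp
    simp only [Finset.mem_filter] at hp
    rcases hp.2 with h | ⟨h, -⟩
    · exact le_of_eq (Fin.ext h)
    · exact le_of_lt h
  · intro i; simp
  · rw [Finset.card_filter, Fintype.sum_prod_type]
    have row : ∀ i : Fin n,
        (∑ j : Fin n, if ((i, j).1.val = (i, j).2.val ∨
          ((i, j).1.val < (i, j).2.val ∧ σ (i, j).1.val + (n - 1 - (i, j).2.val) < m))
          then 1 else 0) = 1 + min (n - 1 - i.val) (m - σ i.val) := by
      intro i
      rw [Fin.sum_univ_eq_sum_range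
        (fun t => if (i.val = t ∨ (i.val < t ∧ σ i.val + (n - 1 - t) < m)) then (1:ℕ) else 0) n]
      rw [← Finset.card_filter]
      have hi := i.isLt
      set t := min (n - 1 - i.val) (m - σ i.val) with ht
      have hset : (Finset.range n).filter
          (fun j => i.val = j ∨ (i.val < j ∧ σ i.val + (n - 1 - j) < m)) =
          insert i.val (Finset.Ico (n - t) n) := by
        ext j
        simp only [Finset.mem_filter, Finset.mem_range, Finset.mem_insert, Finset.mem_Ico]
        omega
      rw [hset, Finset.card_insert_of_notMem (by simp only [Finset.mem_Ico]; omega),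
        Nat.card_Ico]
      omega
    rw [Finset.sum_congr rfl (fun i _ => row i), Finset.sum_add_distrib]
    simp only [Finset.sum_const, Finset.card_univ, Fintype.card_fin, smul_eq_mul, mul_one]
    rw [Fin.sum_univ_eq_sum_range (fun t => min (n - 1 - t) (m - σ t)) n]
    rw [minsum_aux (fun i => n - 1 - i) n m hm]
    omega
  · apply span_mul_closed
    intro p hp q hq hpq
    simp only [Finset.mem_filter, Finset.mem_univ, true_and] at hp hq ⊢
    have hpq' : p.2.val = q.1.val := by rw [hpq]
    rcases hp with h1 | ⟨h1, h2⟩ <;> rcases hq with h3 | ⟨h3, h4⟩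
    · left; omega
    · right
      have : p.1.val = q.1.val := by omega
      rw [this]; exact ⟨h3, h4⟩
    · have : q.2.val = p.2.val := by omega
      right; rw [this]; exact ⟨h1, h2⟩
    · right
      refine ⟨by omega, ?_⟩
      have := q.2.isLt
      omega
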